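/- Let Y be a locally compact Tychonoff space which is an s_ℝ-space, and let X be an s_ℝ-space. Then the product X × Y is an s_ℝ-space. -/

import Mathlib

open Set Filter Topology

/-- A set `H` of continuous real-valued functions is equicontinuous. -/
def EquicontinuousSet {X : Type*} [TopologicalSpace X] (H : Set C(X, ℝ)) : Prop :=
  ∀ x : X, ∀ ε : ℝ, 0 < ε → ∃ U ∈ 𝓝 x, ∀ x' ∈ U, ∀ f ∈ H, |f x' - f x| < ε

/-- `X` is Ascoli: every compact subset of `C_k(X)` is equicontinuous. -/
def AscoliSpace (X : Type*) [TopologicalSpace X] : Prop :=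
  ∀ K : Set C(X, ℝ), IsCompact K → EquicontinuousSet K

/-- `X` is sequentially Ascoli: every convergent sequence in `C_k(X)` is equicontinuous. -/
def SeqAscoliSpace (X : Type*) [TopologicalSpace X] : Prop :=
  ∀ (f : ℕ → C(X, ℝ)) (g : C(X, ℝ)), Tendsto f atTop (𝓝 g) →
    EquicontinuousSet (Set.range f ∪ {g})

/-- A function is `k`-continuous if its restriction to every compact subset is continuous. -/
def KContinuous {X Y : Type*} [TopologicalSpace X] [TopologicalSpace Y] (f : X → Y) : Prop :=
  ∀ K : Set X, IsCompact K → ContinuousOn f K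

/-- `X` is a `k_ℝ`-space if every `k`-continuous real-valued function is continuous. -/
def KRSpace (X : Type*) [TopologicalSpace X] : Prop :=
  ∀ f : X → ℝ, KContinuous f → Continuous f

/-- `X` is an `s_ℝ`-space if every sequentially continuous real-valued function is continuous. -/
def SRSpace (X : Type*) [TopologicalSpace X] : Prop :=
  ∀ f : X → ℝ, SeqContinuous f → Continuous f

/-- A function on a product is separately continuous. -/
def SeparatelyContinuous {X K : Type*} [TopologicalSpace X] [TopologicalSpace K]
    (Φ : X × K → ℝ) : Prop :=
  (∀ x : X, Continuous fun k => Φ (x, k)) ∧ (∀ k : K, Continuous fun x => Φ (x, k))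

/-- `X` is pseudocompact: every continuous real-valued function on `X` is bounded. -/
def Pseudocompact (X : Type*) [TopologicalSpace X] : Prop :=
  ∀ f : X → ℝ, Continuous f → ∃ M : ℝ, ∀ x : X, |f x| ≤ M

/-- A subset `A` of `X` is functionally bounded if every continuous real-valued
function on `X` is bounded on `A`. -/
def FunctionallyBounded {X : Type*} [TopologicalSpace X] (A : Set X) : Prop :=
  ∀ f : X → ℝ, Continuous f → ∃ M : ℝ, ∀ a ∈ A, |f a| ≤ M

/-- An `R`-quotient map: a continuous surjection such that real-valued functions on the
codomain are continuous as soon as their composition with the map is continuous. -/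
def RQuotientMap {X Y : Type*} [TopologicalSpace X] [TopologicalSpace Y] (p : X → Y) : Prop :=
  Continuous p ∧ Function.Surjective p ∧ ∀ φ : Y → ℝ, Continuous (φ ∘ p) → Continuous φ


section Aux
variable {X Y : Type*} [TopologicalSpace X] [TopologicalSpace Y]

private lemma min_abs_triangle (a b : ℝ) : min |a| 1 ≤ min |b| 1 + min |a - b| 1 := by
  rcases le_total (1:ℝ) |a - b| with h | h
  · have : min |a - b| 1 = 1 := min_eq_right h
    have h2 : min |a| 1 ≤ 1 := min_le_right _ _
    have h3 : (0:ℝ) ≤ min |b| 1 := le_min (abs_nonneg b) zero_le_one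
    linarith
  · have htri : |a| ≤ |b| + |a - b| := by
      calc |a| = |b + (a - b)| := by ring_nf
      _ ≤ |b| + |a - b| := abs_add_le _ _
    have : min |a - b| 1 = |a - b| := min_eq_left h
    rw [this]
    rcases le_total |b| 1 with hb | hb
    · rw [min_eq_left hb]
      exact le_trans (min_le_left _ _) htri
    · rw [min_eq_right hb]
      have : min |a| 1 ≤ 1 := min_le_right _ _
      linarith [abs_nonneg (a-b)]

variable {X Y : Type*} [TopologicalSpace X] [TopologicalSpace Y]

private lemma sectY (hY : SRSpace Y) (f : X × Y → ℝ) (hf : SeqContinuous f) (x : X) :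
    Continuous fun y => f (x, y) := by
  apply hY
  intro z p hz
  exact hf (Tendsto.prodMk_nhds tendsto_const_nhds hz)

private lemma lemB (f : X × Y → ℝ) (hf : SeqContinuous f) (u : ℕ → X) (x₀ : X)
    (hu : Tendsto u atTop (𝓝 x₀)) (z : ℕ → Y) (z₀ : Y) (hz : Tendsto z atTop (𝓝 z₀))
    (δ : ℝ) (hδ : 0 < δ) :
    ∃ N, ∀ n ≥ N, (∀ k, |f (u n, z k) - f (x₀, z k)| ≤ δ) ∧ |f (u n, z₀) - f (x₀, z₀)| ≤ δ := by
  have Hpt : ∀ y : Y, Tendsto (fun n => |f (u n, y) - f (x₀, y)|) atTop (𝓝 0) := by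
    intro y
    have h1 : Tendsto (fun n => f (u n, y)) atTop (𝓝 (f (x₀, y))) :=
      hf (Tendsto.prodMk_nhds hu tendsto_const_nhds)
    have := (h1.sub_const (f (x₀, y))).abs
    simpa using this
  -- second conjunct is eventual; first: by contradiction
  have H2 : ∀ᶠ n in atTop, |f (u n, z₀) - f (x₀, z₀)| ≤ δ := by
    have := Hpt z₀
    filter_upwards [this.eventually (eventually_le_nhds hδ)] with n hn using hn
  have H1 : ∀ᶠ n in atTop, ∀ k, |f (u n, z k) - f (x₀, z k)| ≤ δ := by
    by_contra hcon
    rw [Filter.not_eventually] at hcon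
    have hcon' : ∃ᶠ n in atTop, ∃ k, δ < |f (u n, z k) - f (x₀, z k)| := by
      apply hcon.mono
      intro n hn
      push_neg at hn
      exact hn
    obtain ⟨φ, hφ, hφP⟩ := Filter.extraction_of_frequently_atTop hcon'
    choose k hk using hφP
    by_cases hbd : ∃ c, ∃ᶠ j in atTop, k j = c
    · obtain ⟨c, hc⟩ := hbd
      obtain ⟨θ, hθ, hθP⟩ := Filter.extraction_of_frequently_atTop hc
      have hlim : Tendsto (fun i => |f (u (φ (θ i)), z c) - f (x₀, z c)|) atTop (𝓝 0) :=
        (Hpt (z c)).comp ((hφ.comp hθ).tendsto_atTop)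
      have hev := hlim.eventually (eventually_lt_nhds hδ)
      obtain ⟨i, hi⟩ := hev.exists
      have := hk (θ i)
      rw [hθP i] at this
      linarith
    · push_neg at hbd
      have hktop : Tendsto k atTop atTop := by
        rw [tendsto_atTop]
        intro b
        have : ∀ᶠ j in atTop, ∀ c ∈ Finset.range b, k j ≠ c := by
          rw [eventually_all_finset]
          intro c _
          have := hbd c
          exact this
        apply this.mono
        intro j hj
        by_contra hlt
        push_neg at hlt
        exact hj (k j) (Finset.mem_range.mpr hlt) rfl
      have h1 : Tendsto (fun j => f (u (φ j), z (k j))) atTop (𝓝 (f (x₀, z₀))) :=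
        hf (Tendsto.prodMk_nhds (hu.comp hφ.tendsto_atTop) (hz.comp hktop))
      have h2 : Tendsto (fun j => f (x₀, z (k j))) atTop (𝓝 (f (x₀, z₀))) :=
        hf (Tendsto.prodMk_nhds tendsto_const_nhds (hz.comp hktop))
      have h3 : Tendsto (fun j => |f (u (φ j), z (k j)) - f (x₀, z (k j))|) atTop (𝓝 0) := by
        have := (h1.sub h2).abs
        simpa using this
      obtain ⟨j, hj⟩ := (h3.eventually (eventually_lt_nhds hδ)).exists
      have := hk j
      linarith
  obtain ⟨N, hN⟩ := eventually_atTop.mp (H1.and H2)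
  exact ⟨N, fun n hn => ⟨(hN n hn).1, (hN n hn).2⟩⟩

private lemma lemC (hY : SRSpace Y) (f : X × Y → ℝ) (hf : SeqContinuous f)
    (K : Set Y) (hK : IsCompact K) (u : ℕ → X) (x₀ : X) (hu : Tendsto u atTop (𝓝 x₀))
    (δ : ℝ) (hδ : 0 < δ) :
    ∀ᶠ n in atTop, ∀ y ∈ K, min |f (u n, y) - f (x₀, y)| 1 < δ := by
  set t : ℕ → Y → ℝ := fun n y => min |f (u n, y) - f (x₀, y)| 1 with ht
  set φ : ℕ → Y → ℝ := fun N y => ⨆ j : ℕ, t (N + j) y with hφ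
  have htnonneg : ∀ n y, 0 ≤ t n y := fun n y => le_min (abs_nonneg _) zero_le_one
  have htle : ∀ n y, t n y ≤ 1 := fun n y => min_le_right _ _
  have hbdd : ∀ N y, BddAbove (Set.range fun j => t (N + j) y) := by
    intro N y
    exact ⟨1, by rintro _ ⟨j, rfl⟩; exact htle _ _⟩
  have hφnonneg : ∀ N y, 0 ≤ φ N y := by
    intro N y
    calc (0:ℝ) ≤ t (N + 0) y := htnonneg _ _
    _ ≤ φ N y := le_ciSup (hbdd N y) 0
  have hφterm : ∀ N j y, t (N + j) y ≤ φ N y := fun N j y => le_ciSup (hbdd N y) j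
  have hφanti : ∀ {M N : ℕ}, M ≤ N → ∀ y, φ N y ≤ φ M y := by
    intro M N hMN y
    apply ciSup_le
    intro j
    have : N + j = M + (N - M + j) := by omega
    rw [this]
    exact hφterm M _ y
  -- sequential continuity of each φ N
  have hφseq : ∀ N, SeqContinuous (φ N) := by
    intro N z z₀ hz
    rw [Metric.tendsto_nhds]
    intro ε hε
    have hε2 : 0 < ε / 2 := by linarith
    obtain ⟨N₁, hN₁⟩ := lemB f hf u x₀ hu z z₀ hz (ε/2) hε2
    have hcontn : ∀ n, Continuous (t n) := by
      intro n
      exact (((sectY hY f hf (u n)).sub (sectY hY f hf x₀)).abs).min continuous_const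
    have E1 : ∀ᶠ i in atTop, ∀ n ∈ Finset.range (N₁ + 1), |t n (z i) - t n z₀| < ε/2 := by
      rw [eventually_all_finset]
      intro n _
      have htd : Tendsto (fun i => t n (z i)) atTop (𝓝 (t n z₀)) := ((hcontn n).tendsto z₀).comp hz
      have h2 := Metric.tendsto_nhds.mp htd (ε/2) hε2
      apply h2.mono
      intro i hi
      rw [Real.dist_eq] at hi
      exact hi
    apply E1.mono
    intro i hi
    simp only [Function.comp_apply, Real.dist_eq]
    rw [abs_sub_lt_iff]
    constructor
    · -- φ N (z i) - φ N z₀ ≤ ε/2, i.e. φ N (z i) ≤ φ N z₀ + ε/2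
      have : φ N (z i) ≤ φ N z₀ + ε/2 := by
        apply ciSup_le
        intro j
        rcases le_or_gt (N + j) N₁ with hc | hc
        · have h1 := hi (N + j) (Finset.mem_range.mpr (by omega))
          have h2 := hφterm N j z₀
          rw [abs_sub_lt_iff] at h1
          linarith [h1.1]
        · have h1 := (hN₁ (N + j) (by omega)).1 i
          have : t (N + j) (z i) ≤ ε/2 := le_trans (min_le_left _ _) h1
          linarith [hφnonneg N z₀]
      linarith
    · have : φ N z₀ ≤ φ N (z i) + ε/2 := by
        apply ciSup_le
        intro j
        rcases le_or_gt (N + j) N₁ with hc | hc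
        · have h1 := hi (N + j) (Finset.mem_range.mpr (by omega))
          have h2 := hφterm N j (z i)
          rw [abs_sub_lt_iff] at h1
          linarith [h1.2]
        · have h1 := (hN₁ (N + j) (by omega)).2
          have : t (N + j) z₀ ≤ ε/2 := le_trans (min_le_left _ _) h1
          linarith [hφnonneg N (z i)]
      linarith
  have hφcont : ∀ N, Continuous (φ N) := fun N => hY _ (hφseq N)
  -- pointwise convergence to 0
  have hpt : ∀ y : Y, ∃ N, φ N y < δ := by
    intro y
    have h0 : Tendsto (fun n => (u n, y)) atTop (𝓝 (x₀, y)) :=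
      Tendsto.prodMk_nhds hu tendsto_const_nhds
    have h1 : Tendsto (fun n => |f (u n, y) - f (x₀, y)|) atTop (𝓝 0) := by
      have := ((hf h0).sub_const (f (x₀, y))).abs
      simpa using this
    have h2 := h1.eventually (eventually_le_nhds (half_pos hδ))
    obtain ⟨N, hN⟩ := eventually_atTop.mp h2
    refine ⟨N, lt_of_le_of_lt (ciSup_le fun j => ?_) (half_lt_self hδ)⟩
    exact le_trans (min_le_left _ _) (hN (N + j) (by omega))
  -- Dini via compactness
  have hcover : K ⊆ ⋃ N : ℕ, (φ N) ⁻¹' (Iio δ) := by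
    intro y _
    obtain ⟨N, hN⟩ := hpt y
    exact mem_iUnion.mpr ⟨N, hN⟩
  obtain ⟨s, hs⟩ := hK.elim_finite_subcover (fun N => (φ N) ⁻¹' (Iio δ))
    (fun N => (isOpen_Iio).preimage (hφcont N)) hcover
  set N₀ := s.sup id with hN₀
  rw [eventually_atTop]
  refine ⟨N₀, fun n hn y hy => ?_⟩
  obtain ⟨M, hMs, hMy⟩ := by
    have := hs hy
    rw [mem_iUnion₂] at this
    exact this
  have hMN₀ : M ≤ N₀ := Finset.le_sup (f := id) hMs
  have h1 : φ N₀ y ≤ φ M y := hφanti hMN₀ y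
  have h2 : t n y ≤ φ N₀ y := by
    have : n = N₀ + (n - N₀) := by omega
    rw [this]
    exact hφterm N₀ _ y
  have : φ M y < δ := hMy
  calc min |f (u n, y) - f (x₀, y)| 1 = t n y := rfl
  _ ≤ φ N₀ y := h2
  _ ≤ φ M y := h1
  _ < δ := this

end Aux

theorem sRSpace_prod_locallyCompact {X Y : Type*} [TopologicalSpace X] [T35Space X]
    [TopologicalSpace Y] [T35Space Y] [LocallyCompactSpace Y]
    (hY : SRSpace Y) (hX : SRSpace X) : SRSpace (X × Y) := by
  intro f hf
  have hsect : ∀ x : X, Continuous fun y => f (x, y) := sectY hY f hf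
  rw [continuous_iff_continuousAt]
  rintro ⟨x₀, y₀⟩
  obtain ⟨K, hKc, hKn⟩ := exists_compact_mem_nhds y₀
  have hKne : Nonempty K := ⟨⟨y₀, mem_of_mem_nhds hKn⟩⟩
  set ψ : X → ℝ := fun x => ⨆ y : K, min |f (x, ↑y) - f (x₀, ↑y)| 1 with hψdef
  have hbdd : ∀ x, BddAbove (Set.range fun y : K => min |f (x, ↑y) - f (x₀, ↑y)| 1) := by
    intro x
    exact ⟨1, by rintro _ ⟨y, rfl⟩; exact min_le_right _ _⟩
  have hψnonneg : ∀ x, 0 ≤ ψ x := by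
    intro x
    obtain ⟨y⟩ := hKne
    calc (0:ℝ) ≤ min |f (x, ↑y) - f (x₀, ↑y)| 1 := le_min (abs_nonneg _) zero_le_one
    _ ≤ ψ x := le_ciSup (hbdd x) y
  have hψseq : SeqContinuous ψ := by
    intro x p hx
    rw [Metric.tendsto_nhds]
    intro ε hε
    have hε2 : 0 < ε / 2 := by linarith
    filter_upwards [lemC hY f hf K hKc x p hx (ε/2) hε2] with n hn
    have hle1 : ψ (x n) ≤ ψ p + ε/2 := by
      apply ciSup_le
      intro y
      have h1 := min_abs_triangle (f (x n, ↑y) - f (x₀, ↑y)) (f (p, ↑y) - f (x₀, ↑y))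
      have h2 : f (x n, ↑y) - f (x₀, ↑y) - (f (p, ↑y) - f (x₀, ↑y)) = f (x n, ↑y) - f (p, ↑y) := by
        ring
      rw [h2] at h1
      have h3 : min |f (x n, ↑y) - f (p, ↑y)| 1 < ε/2 := hn ↑y y.2
      have h4 : min |f (p, ↑y) - f (x₀, ↑y)| 1 ≤ ψ p := le_ciSup (hbdd p) y
      linarith
    have hle2 : ψ p ≤ ψ (x n) + ε/2 := by
      apply ciSup_le
      intro y
      have h1 := min_abs_triangle (f (p, ↑y) - f (x₀, ↑y)) (f (x n, ↑y) - f (x₀, ↑y))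
      have h2 : f (p, ↑y) - f (x₀, ↑y) - (f (x n, ↑y) - f (x₀, ↑y)) = f (p, ↑y) - f (x n, ↑y) := by
        ring
      rw [h2] at h1
      rw [abs_sub_comm (f (p, ↑y)) (f (x n, ↑y))] at h1
      have h3 : min |f (x n, ↑y) - f (p, ↑y)| 1 < ε/2 := hn ↑y y.2
      have h4 : min |f (x n, ↑y) - f (x₀, ↑y)| 1 ≤ ψ (x n) := le_ciSup (hbdd (x n)) y
      linarith
    simp only [Function.comp_apply, Real.dist_eq]
    rw [abs_sub_lt_iff]
    constructor <;> linarith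
  have hψcont : Continuous ψ := hX ψ hψseq
  have hψ0 : ψ x₀ = 0 := by
    have : ∀ y : K, min |f (x₀, ↑y) - f (x₀, ↑y)| 1 = 0 := by
      intro y
      simp
    simp only [hψdef, this]
    exact ciSup_const
  -- continuity at (x₀, y₀)
  rw [ContinuousAt, Metric.tendsto_nhds]
  intro ε hε
  set δ : ℝ := min (ε/2) (1/2) with hδdef
  have hδ : 0 < δ := lt_min (by linarith) (by norm_num)
  have hδε : δ ≤ ε/2 := min_le_left _ _
  have hδ1 : δ < 1 := lt_of_le_of_lt (min_le_right _ _) (by norm_num)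
  have hV : ∀ᶠ x in 𝓝 x₀, ψ x < δ := by
    have ht : Tendsto ψ (𝓝 x₀) (𝓝 0) := by
      rw [← hψ0]
      exact hψcont.tendsto x₀
    exact ht.eventually_lt_const hδ
  have hW : ∀ᶠ y in 𝓝 y₀, |f (x₀, y) - f (x₀, y₀)| < δ ∧ y ∈ K := by
    have ht : Tendsto (fun y => f (x₀, y)) (𝓝 y₀) (𝓝 (f (x₀, y₀))) := (hsect x₀).tendsto y₀
    have h1 := Metric.tendsto_nhds.mp ht δ hδ
    apply (h1.and hKn).mono
    intro y hy
    rw [Real.dist_eq] at hy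
    exact hy
  filter_upwards [hV.prod_nhds hW] with q hq
  obtain ⟨qx, qy⟩ := q
  obtain ⟨h1, h2, h3⟩ := hq
  have h4 : min |f (qx, qy) - f (x₀, qy)| 1 ≤ ψ qx := le_ciSup (hbdd qx) ⟨qy, h3⟩
  have h5 : min |f (qx, qy) - f (x₀, qy)| 1 < δ := lt_of_le_of_lt h4 h1
  have h6 : |f (qx, qy) - f (x₀, qy)| < δ := by
    rcases le_total |f (qx, qy) - f (x₀, qy)| 1 with hc | hc
    · rwa [min_eq_left hc] at h5
    · rw [min_eq_right hc] at h5
      linarith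
  rw [Real.dist_eq]
  have : f (qx, qy) - f (x₀, y₀) = (f (qx, qy) - f (x₀, qy)) + (f (x₀, qy) - f (x₀, y₀)) := by
    ring
  calc |f (qx, qy) - f (x₀, y₀)| ≤ |f (qx, qy) - f (x₀, qy)| + |f (x₀, qy) - f (x₀, y₀)| := by
        rw [this]; exact abs_add_le _ _
  _ < δ + δ := add_lt_add h6 h2
  _ ≤ ε := by linarith
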